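/- Let G be a directed graph, P a simple directed path in G, u, v vertices such that (1) there exists a u→v path in G through V(P), (2) first*(u) = p_i and last*(v) = p_j exist and are strongly connected in G. Let p* be the latest vertex of P strongly connected to p_i, and let W be the union of {p_m}, L_m, and L^R_m over all indices m with p_m strongly connected to p_i, where L_m is the m-th forward layer and L^R_m the m-th reverse layer. Then every u→v path Q in G that meets V(P) lies entirely within the induced subgraph G[W]; moreover u reaches p* in G[W] and p* reaches v in G[W]. -/

import Mathlib

/-- A (directed) walk in digraph `G` from `a` to `b`, given as its list of vertices. -/
def DiWalk {V : Type*} (G : V → V → Prop) (a b : V) (l : List V) : Prop :=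
  List.Chain' G l ∧ l.head? = some a ∧ l.getLast? = some b

/-- `Sat G p a b`: there is a satellite walk (internal vertices avoiding `p`)
from `a` to `b` in `G`. -/
def Sat {V : Type*} (G : V → V → Prop) (p : List V) (a b : V) : Prop :=
  ∃ l, DiWalk G a b l ∧ ∀ w ∈ l.tail.dropLast, w ∉ p

/-- Strong connectivity (mutual reachability) in `G`. -/
def SConn {V : Type*} (G : V → V → Prop) (a b : V) : Prop :=
  Relation.ReflTransGen G a b ∧ Relation.ReflTransGen G b a

/-- The `m`-th forward layer. -/
def Layer {V : Type*} (G : V → V → Prop) (p : List V) (m : Fin p.length) : Set V :=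
  {w | w ∉ p ∧ Sat G p (p.get m) w ∧
    ∀ j : Fin p.length, (m : ℕ) < (j : ℕ) → ¬ Sat G p (p.get j) w}

/-- The `m`-th reverse layer. -/
def RLayer {V : Type*} (G : V → V → Prop) (p : List V) (m : Fin p.length) : Set V :=
  {w | w ∉ p ∧ Sat G p w (p.get m) ∧
    ∀ j : Fin p.length, (j : ℕ) < (m : ℕ) → ¬ Sat G p w (p.get j)}

namespace StmtAux

variable {V : Type*} {G : V → V → Prop} {p : List V} {a b c w : V}

def Sat' (G : V → V → Prop) (p : List V) (a b : V) : Prop :=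
  a = b ∨ ∃ c, Relation.ReflTransGen (fun x y => G x y ∧ y ∉ p) a c ∧ G c b

theorem dw_single : DiWalk G a a [a] := by
  refine ⟨List.isChain_singleton a, rfl, rfl⟩

theorem dw_pair (h : G a b) : DiWalk G a b [a, b] := by
  refine ⟨List.isChain_pair.mpr h, rfl, rfl⟩

theorem dw_reach {l : List V} (h : DiWalk G a b l) : Relation.ReflTransGen G a b := by
  induction l generalizing a with
  | nil => simp [DiWalk] at h
  | cons x t ih =>
    obtain ⟨hc, hh, hl⟩ := h
    simp only [List.head?_cons, Option.some.injEq] at hh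
    subst hh
    cases t with
    | nil =>
      simp only [List.getLast?_singleton, Option.some.injEq] at hl
      subst hl; exact Relation.ReflTransGen.refl
    | cons c t' =>
      have hG : G x c := (List.isChain_cons_cons.mp hc).1
      have : DiWalk G c b (c :: t') :=
        ⟨(List.isChain_cons_cons.mp hc).2, rfl, by rw [← hl, List.getLast?_cons_cons]⟩
      exact Relation.ReflTransGen.head hG (ih this)

theorem dw_append {l1 l2 : List V} (h1 : DiWalk G a w l1) (h2 : DiWalk G w b l2) :
    DiWalk G a b (l1 ++ l2.tail) := by
  obtain ⟨c1, h1h, h1l⟩ := h1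
  obtain ⟨c2, h2h, h2l⟩ := h2
  cases l2 with
  | nil => simp at h2h
  | cons w' t =>
    simp only [List.head?_cons, Option.some.injEq] at h2h
    subst h2h
    have hne : l1 ≠ [] := by rintro rfl; simp at h1h
    obtain ⟨l1', rfl⟩ : ∃ l1', l1 = l1' ++ [w'] := by
      refine ⟨l1.dropLast, ?_⟩
      have := List.dropLast_append_getLast hne
      rw [List.getLast?_eq_getLast hne, Option.some.injEq] at h1l
      rw [h1l] at this; exact this.symm
    simp only [List.tail_cons]
    constructor
    · rw [show l1' ++ [w'] ++ t = l1' ++ (w' :: t) by simp]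
      exact List.isChain_split.mpr ⟨c1, c2⟩
    constructor
    · rw [List.head?_append, h1h]; rfl
    · cases t with
      | nil =>
        simp only [List.getLast?_singleton, Option.some.injEq] at h2l
        subst h2l; simpa using h1l
      | cons y t' =>
        rw [List.getLast?_cons_cons] at h2l
        rw [List.append_assoc, List.getLast?_append,
          show [w'] ++ y :: t' = w' :: y :: t' from rfl, List.getLast?_cons_cons, h2l]
        rfl

theorem dw_split {l1 l2 : List V} (h : DiWalk G a b (l1 ++ w :: l2)) :
    DiWalk G a w (l1 ++ [w]) ∧ DiWalk G w b (w :: l2) := by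
  obtain ⟨hc, hh, hl⟩ := h
  obtain ⟨hc1, hc2⟩ := List.isChain_split.mp hc
  refine ⟨⟨hc1, ?_, by simp⟩, ⟨hc2, rfl, ?_⟩⟩
  · cases l1 with
    | nil => simpa using hh
    | cons x r => simpa using hh
  · rw [List.getLast?_append] at hl
    cases l2 with
    | nil => simpa using hl
    | cons y t' =>
      rw [show ((w :: y :: t').getLast? : Option V) = (y :: t').getLast? from
        List.getLast?_cons_cons ..] at hl ⊢
      rw [List.getLast?_eq_getLast (by simp)] at hl ⊢
      simpa using hl

theorem sat'_refl : Sat' G p a a := Or.inl rfl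

theorem sat'_head (hG : G a c) (hc : c ∉ p) (h : Sat' G p c b) : Sat' G p a b := by
  rcases h with rfl | ⟨d, ch, e⟩
  · exact Or.inr ⟨a, Relation.ReflTransGen.refl, hG⟩
  · exact Or.inr ⟨d, Relation.ReflTransGen.head ⟨hG, hc⟩ ch, e⟩

theorem sat'_trans (h1 : Sat' G p a w) (h2 : Sat' G p w b) (hw : w ∉ p) : Sat' G p a b := by
  rcases h1 with rfl | ⟨c, ch, e⟩
  · exact h2
  · rcases h2 with rfl | ⟨d, ch2, e2⟩
    · exact Or.inr ⟨c, ch, e⟩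
    · exact Or.inr ⟨d, (ch.tail ⟨e, hw⟩).trans ch2, e2⟩

theorem sat'_reach (h : Sat' G p a b) : Relation.ReflTransGen G a b := by
  rcases h with rfl | ⟨c, ch, e⟩
  · exact Relation.ReflTransGen.refl
  · exact (Relation.ReflTransGen.mono (r := fun x y => G x y ∧ y ∉ p) (p := G) (fun x y h => h.1) a c ch).tail e

theorem chainAvoid_toWalk (h : Relation.ReflTransGen (fun x y => G x y ∧ y ∉ p) a c) :
    ∃ l, DiWalk G a c l ∧ ∀ x ∈ l.tail, x ∉ p := by
  induction h with
  | refl => exact ⟨[a], dw_single, by simp⟩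
  | tail _ h2 ih =>
    obtain ⟨l, hw, ht⟩ := ih
    rename_i d e _
    refine ⟨l ++ [e], dw_append hw (dw_pair h2.1), ?_⟩
    have hne : l ≠ [] := by rintro rfl; simp [DiWalk] at hw
    intro x hx
    cases l with
    | nil => simp at hne
    | cons y r =>
      simp only [List.cons_append, List.tail_cons, List.mem_append, List.mem_singleton] at hx
      rcases hx with hx | rfl
      · exact ht x (by simpa using hx)
      · exact h2.2

theorem sat'_to_sat (h : Sat' G p a b) : Sat G p a b := by
  rcases h with rfl | ⟨c, ch, e⟩
  · exact ⟨[a], dw_single, by simp⟩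
  · obtain ⟨l, hw, ht⟩ := chainAvoid_toWalk ch
    refine ⟨l ++ [b], dw_append hw (dw_pair e), ?_⟩
    have hne : l ≠ [] := by rintro rfl; simp [DiWalk] at hw
    cases l with
    | nil => simp at hne
    | cons y r =>
      simp only [List.cons_append, List.tail_cons]
      rw [List.dropLast_concat]
      intro x hx; exact ht x (by simpa using hx)

theorem walk_to_sat' {l : List V} (h : DiWalk G a b l)
    (hint : ∀ x ∈ l.tail.dropLast, x ∉ p) : Sat' G p a b := by
  induction l generalizing a with
  | nil => simp [DiWalk] at h
  | cons x t ih =>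
    obtain ⟨hc, hh, hl⟩ := h
    simp only [List.head?_cons, Option.some.injEq] at hh
    subst hh
    cases t with
    | nil =>
      simp only [List.getLast?_singleton, Option.some.injEq] at hl
      subst hl; exact sat'_refl
    | cons c t' =>
      have hG : G x c := (List.isChain_cons_cons.mp hc).1
      have hwc : DiWalk G c b (c :: t') :=
        ⟨(List.isChain_cons_cons.mp hc).2, rfl, by rw [← hl, List.getLast?_cons_cons]⟩
      cases t' with
      | nil =>
        simp only [List.getLast?_cons_cons, List.getLast?_singleton,
          Option.some.injEq] at hl
        subst hl
        exact Or.inr ⟨x, Relation.ReflTransGen.refl, hG⟩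
      | cons d t'' =>
        simp only [List.tail_cons, show (c :: d :: t'').dropLast = c :: (d :: t'').dropLast
          from rfl] at hint
        have hcp : c ∉ p := hint c (by simp)
        refine sat'_head hG hcp (ih hwc ?_)
        intro x hx
        simp only [List.tail_cons] at hx
        exact hint x (by simp [hx])

theorem sat_to_sat' (h : Sat G p a b) : Sat' G p a b := by
  obtain ⟨l, hw, hint⟩ := h
  exact walk_to_sat' hw hint

theorem reach_toWalk (h : Relation.ReflTransGen G a b) : ∃ l, DiWalk G a b l := by
  induction h with
  | refl => exact ⟨[a], dw_single⟩
  | tail _ h2 ih =>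
    obtain ⟨l, hw⟩ := ih
    exact ⟨_, dw_append hw (dw_pair h2)⟩

theorem last_lemma {l : List V} (h : DiWalk G a b l) (hx : ∃ x ∈ l, x ∈ p) :
    ∃ m : Fin p.length, Relation.ReflTransGen G a (p.get m) ∧ Sat' G p (p.get m) b := by
  induction l generalizing a with
  | nil => simp at hx
  | cons x t ih =>
    obtain ⟨hc, hh, hl⟩ := h
    simp only [List.head?_cons, Option.some.injEq] at hh
    subst hh
    by_cases hpt : ∃ y ∈ t, y ∈ p
    · obtain ⟨y, hy, hyp⟩ := hpt
      cases t with
      | nil => simp at hy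
      | cons c t' =>
        have hG : G x c := (List.isChain_cons_cons.mp hc).1
        have hwc : DiWalk G c b (c :: t') :=
          ⟨(List.isChain_cons_cons.mp hc).2, rfl, by rw [← hl, List.getLast?_cons_cons]⟩
        obtain ⟨m, hr, hs⟩ := ih hwc ⟨y, hy, hyp⟩
        exact ⟨m, Relation.ReflTransGen.head hG hr, hs⟩
    · push_neg at hpt
      have hxp : x ∈ p := by
        obtain ⟨y, hy, hyp⟩ := hx
        rcases List.mem_cons.mp hy with rfl | hy
        · exact hyp
        · exact absurd hyp (hpt y hy)
      obtain ⟨m, hm⟩ := List.mem_iff_get.mp hxp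
      have hsat : Sat' G p x b := by
        refine walk_to_sat' ⟨hc, rfl, hl⟩ ?_
        intro z hz
        simp only [List.tail_cons] at hz
        exact hpt z (List.dropLast_subset _ hz)
      exact ⟨m, by rw [hm], by rw [hm]; exact hsat⟩


theorem first_lemma {l : List V} (h : DiWalk G a b l) (hx : ∃ x ∈ l, x ∈ p) :
    ∃ (m : Fin p.length) (l' : List V), Sat' G p a (p.get m) ∧
      DiWalk G (p.get m) b l' ∧ ∃ x ∈ l', x ∈ p := by
  induction l generalizing a with
  | nil => simp at hx
  | cons x t ih =>
    obtain ⟨hc, hh, hl⟩ := h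
    simp only [List.head?_cons, Option.some.injEq] at hh
    subst hh
    by_cases hxp : x ∈ p
    · obtain ⟨m, hm⟩ := List.mem_iff_get.mp hxp
      exact ⟨m, x :: t, Or.inl hm.symm, by rw [hm]; exact ⟨hc, rfl, hl⟩,
        ⟨x, by simp, hxp⟩⟩
    · have hpt : ∃ y ∈ t, y ∈ p := by
        obtain ⟨y, hy, hyp⟩ := hx
        rcases List.mem_cons.mp hy with rfl | hy
        · exact absurd hyp hxp
        · exact ⟨y, hy, hyp⟩
      cases t with
      | nil => simp at hpt
      | cons c t' =>
        have hG : G x c := (List.isChain_cons_cons.mp hc).1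
        have hwc : DiWalk G c b (c :: t') :=
          ⟨(List.isChain_cons_cons.mp hc).2, rfl, by rw [← hl, List.getLast?_cons_cons]⟩
        by_cases hcp : c ∈ p
        · obtain ⟨m, hm⟩ := List.mem_iff_get.mp hcp
          exact ⟨m, c :: t', Or.inr ⟨x, Relation.ReflTransGen.refl, by rw [hm]; exact hG⟩,
            by rw [hm]; exact hwc, ⟨c, by simp, hcp⟩⟩
        · obtain ⟨m, l', hs, hw', hx'⟩ := ih hwc hpt
          exact ⟨m, l', sat'_head hG hcp hs, hw', hx'⟩

theorem fin_exists_max {n : ℕ} (Q : Fin n → Prop) (m0 : Fin n) (h : Q m0) :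
    ∃ m, Q m ∧ ∀ m', Q m' → m' ≤ m := by
  classical
  let s := Finset.univ.filter Q
  have hs : s.Nonempty := ⟨m0, by simp [s, h]⟩
  refine ⟨s.max' hs, ?_, fun m' hm' => s.le_max' m' (by simp [s, hm'])⟩
  have := s.max'_mem hs
  simpa [s] using this

theorem fin_exists_min {n : ℕ} (Q : Fin n → Prop) (m0 : Fin n) (h : Q m0) :
    ∃ m, Q m ∧ ∀ m', Q m' → m ≤ m' := by
  classical
  let s := Finset.univ.filter Q
  have hs : s.Nonempty := ⟨m0, by simp [s, h]⟩
  refine ⟨s.min' hs, ?_, fun m' hm' => s.min'_le m' (by simp [s, hm'])⟩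
  have := s.min'_mem hs
  simpa [s] using this

theorem path_walk (hchain : List.Chain' G p) :
    ∀ (i : Fin p.length) (k : ℕ) (hk : k < p.length), i.1 ≤ k →
      ∃ l, DiWalk G (p.get i) (p.get ⟨k, hk⟩) l ∧ ∀ x ∈ l, x ∈ p := by
  intro i k
  induction k with
  | zero =>
    intro hk hik
    have : i = ⟨0, hk⟩ := Fin.ext (Nat.le_zero.mp hik)
    exact ⟨[p.get i], by rw [this]; exact dw_single, by
      intro x hx; simp only [List.mem_singleton] at hx; subst hx; exact List.get_mem ..⟩
  | succ n ihn =>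
    intro hk hik
    by_cases hin : i.1 = n + 1
    · have : i = ⟨n + 1, hk⟩ := Fin.ext hin
      exact ⟨[p.get i], by rw [this]; exact dw_single, by
        intro x hx; simp only [List.mem_singleton] at hx; subst hx; exact List.get_mem ..⟩
    · have hik' : i.1 ≤ n := by omega
      have hn : n < p.length := by omega
      obtain ⟨l, hw, hp⟩ := ihn hn hik'
      have hedge : G (p.get ⟨n, hn⟩) (p.get ⟨n + 1, hk⟩) := by
        have := List.isChain_iff_getElem.mp hchain n (by omega)
        exact this
      refine ⟨l ++ [p.get ⟨n + 1, hk⟩], dw_append hw (dw_pair hedge), ?_⟩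
      intro x hx
      rcases List.mem_append.mp hx with hx | hx
      · exact hp x hx
      · simp only [List.mem_singleton] at hx; subst hx; exact List.get_mem ..

theorem path_reach (hchain : List.Chain' G p) {m m' : Fin p.length} (h : m ≤ m') :
    Relation.ReflTransGen G (p.get m) (p.get m') := by
  obtain ⟨l, hw, _⟩ := path_walk hchain m m'.1 m'.2 h
  exact dw_reach (by convert hw)


theorem main_lemma {i : Fin p.length}
    (hchain : List.Chain' G p)
    (HA : ∀ m : Fin p.length, Sat' G p a (p.get m) →
      Relation.ReflTransGen G (p.get i) (p.get m))
    (HB : ∀ m : Fin p.length, Sat' G p (p.get m) b →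
      Relation.ReflTransGen G (p.get m) (p.get i)) :
    ∀ l, DiWalk G a b l → (∃ x ∈ l, x ∈ p) → ∀ w ∈ l,
      ∃ m : Fin p.length, SConn G (p.get m) (p.get i) ∧
        (w = p.get m ∨ w ∈ Layer G p m ∨ w ∈ RLayer G p m) := by
  intro l hl hx w hw
  obtain ⟨l1, l2, rfl⟩ := List.append_of_mem hw
  obtain ⟨hpre, hsuf⟩ := dw_split hl
  by_cases hwp : w ∈ p
  · obtain ⟨m, hm⟩ := List.mem_iff_get.mp hwp
    have hfwd : Relation.ReflTransGen G (p.get i) w := by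
      obtain ⟨m4, l', hs4, hw4, _⟩ := first_lemma hpre ⟨w, by simp, hwp⟩
      exact (HA m4 hs4).trans (dw_reach hw4)
    have hbwd : Relation.ReflTransGen G w (p.get i) := by
      obtain ⟨m3, hr3, hs3⟩ := last_lemma hsuf ⟨w, by simp, hwp⟩
      exact hr3.trans (HB m3 hs3)
    exact ⟨m, ⟨by rw [hm]; exact hbwd, by rw [hm]; exact hfwd⟩, Or.inl hm.symm⟩
  · by_cases hA : ∃ x ∈ l1, x ∈ p
    · obtain ⟨x0, hx0, hx0p⟩ := hA
      obtain ⟨m4, l', hs4, hw4, hx4⟩ :=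
        first_lemma hpre ⟨x0, List.mem_append_left _ hx0, hx0p⟩
      obtain ⟨m1, hr1, hs1⟩ := last_lemma hw4 hx4
      obtain ⟨m, hQm, hmax⟩ :=
        fin_exists_max (fun m => Sat G p (p.get m) w) m1 (sat'_to_sat hs1)
      have hmem : w ∈ Layer G p m := by
        refine ⟨hwp, hQm, fun j' hj' hS => ?_⟩
        have := hmax j' hS
        rw [Fin.le_def] at this
        omega
      have h1 : Relation.ReflTransGen G (p.get i) (p.get m) :=
        (HA m4 hs4).trans (hr1.trans (path_reach hchain (hmax m1 (sat'_to_sat hs1))))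
      have h2 : Relation.ReflTransGen G (p.get m) (p.get i) := by
        by_cases hB2 : ∃ x ∈ l2, x ∈ p
        · obtain ⟨x2, hx2, hx2p⟩ := hB2
          obtain ⟨m3, hr3, hs3⟩ :=
            last_lemma hsuf ⟨x2, List.mem_cons_of_mem _ hx2, hx2p⟩
          exact (sat'_reach (sat_to_sat' hQm)).trans (hr3.trans (HB m3 hs3))
        · push_neg at hB2
          have hsatwb : Sat' G p w b := by
            refine walk_to_sat' hsuf ?_
            intro z hz
            simp only [List.tail_cons] at hz
            exact hB2 z (List.dropLast_subset _ hz)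
          exact HB m (sat'_trans (sat_to_sat' hQm) hsatwb hwp)
      exact ⟨m, ⟨h2, h1⟩, Or.inr (Or.inl hmem)⟩
    · have hB : ∃ x ∈ l2, x ∈ p := by
        obtain ⟨y, hy, hyp⟩ := hx
        rcases List.mem_append.mp hy with hy | hy
        · exact absurd ⟨y, hy, hyp⟩ hA
        · rcases List.mem_cons.mp hy with rfl | hy
          · exact absurd hyp hwp
          · exact ⟨y, hy, hyp⟩
      obtain ⟨x2, hx2, hx2p⟩ := hB
      obtain ⟨m0, l', hs0, hw0, hx0'⟩ :=
        first_lemma hsuf ⟨x2, List.mem_cons_of_mem _ hx2, hx2p⟩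
      obtain ⟨m, hQm, hmin⟩ :=
        fin_exists_min (fun m => Sat G p w (p.get m)) m0 (sat'_to_sat hs0)
      have hmem : w ∈ RLayer G p m := by
        refine ⟨hwp, hQm, fun j' hj' hS => ?_⟩
        have := hmin j' hS
        rw [Fin.le_def] at this
        omega
      push_neg at hA
      have hsat_aw : Sat' G p a w := by
        refine walk_to_sat' hpre ?_
        intro z hz
        cases l1 with
        | nil => simp at hz
        | cons y r =>
          simp only [List.cons_append, List.tail_cons] at hz
          rw [List.dropLast_concat] at hz
          exact hA z (List.mem_cons_of_mem _ hz)
      have h1 : Relation.ReflTransGen G (p.get i) (p.get m) :=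
        HA m (sat'_trans hsat_aw (sat_to_sat' hQm) hwp)
      have h2 : Relation.ReflTransGen G (p.get m) (p.get i) := by
        obtain ⟨m3, hr3, hs3⟩ := last_lemma hw0 hx0'
        exact (path_reach hchain (hmin m0 (sat'_to_sat hs0))).trans
          (hr3.trans (HB m3 hs3))
      exact ⟨m, ⟨h2, h1⟩, Or.inr (Or.inr hmem)⟩

end StmtAux

open StmtAux in
/-- if some `u → v` path meets `V(P)`, `first*(u) = p.get i` and
`last*(v) = p.get j` exist and are strongly connected in `G`, `p* = p.get istar` is
the latest vertex of `P` strongly connected to `p.get i`, and `W` is the union of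
`{p_m} ∪ L_m ∪ L^R_m` over all `m` with `p_m` strongly connected to `p.get i`, then
every `u → v` walk meeting `V(P)` lies entirely in `G[W]`, `u` reaches `p*` in `G[W]`,
and `p*` reaches `v` in `G[W]`. -/
theorem stmt_16 {V : Type*} (G : V → V → Prop) (p : List V)
    (hchain : List.Chain' G p) (hnodup : p.Nodup) (u v : V)
    (i j : Fin p.length)
    (hthrough : ∃ l, DiWalk G u v l ∧ ∃ w ∈ l, w ∈ p)
    (hi1 : Sat G p u (p.get i))
    (hi2 : ∀ i' : Fin p.length, Sat G p u (p.get i') → i ≤ i')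
    (hj1 : Sat G p (p.get j) v)
    (hj2 : ∀ j' : Fin p.length, Sat G p (p.get j') v → j' ≤ j)
    (hsc : SConn G (p.get i) (p.get j))
    (istar : Fin p.length)
    (histar1 : SConn G (p.get istar) (p.get i))
    (histar2 : ∀ m : Fin p.length, SConn G (p.get m) (p.get i) → m ≤ istar)
    (W : Set V)
    (hW : W = {w | ∃ m : Fin p.length, SConn G (p.get m) (p.get i) ∧
      (w = p.get m ∨ w ∈ Layer G p m ∨ w ∈ RLayer G p m)}) :
    (∀ l, DiWalk G u v l → (∃ w ∈ l, w ∈ p) → ∀ w ∈ l, w ∈ W) ∧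
    (∃ l, DiWalk G u (p.get istar) l ∧ ∀ w ∈ l, w ∈ W) ∧
    (∃ l, DiWalk G (p.get istar) v l ∧ ∀ w ∈ l, w ∈ W) := by
  subst hW
  have HAu : ∀ m : Fin p.length, Sat' G p u (p.get m) →
      Relation.ReflTransGen G (p.get i) (p.get m) :=
    fun m h => path_reach hchain (hi2 m (sat'_to_sat h))
  have HBv : ∀ m : Fin p.length, Sat' G p (p.get m) v →
      Relation.ReflTransGen G (p.get m) (p.get i) :=
    fun m h => (path_reach hchain (hj2 m (sat'_to_sat h))).trans hsc.2
  refine ⟨fun l hl hx w hw => main_lemma hchain HAu HBv l hl hx w hw, ?_, ?_⟩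
  · have hii : i ≤ istar :=
      histar2 i ⟨Relation.ReflTransGen.refl, Relation.ReflTransGen.refl⟩
    obtain ⟨l0, hw0, _⟩ := hi1
    obtain ⟨q, hwq, _⟩ := path_walk hchain i istar.1 istar.2 hii
    have hwq' : DiWalk G (p.get i) (p.get istar) q := hwq
    have hw2 : DiWalk G u (p.get istar) (l0 ++ q.tail) := dw_append hw0 hwq'
    have HB' : ∀ m : Fin p.length, Sat' G p (p.get m) (p.get istar) →
        Relation.ReflTransGen G (p.get m) (p.get i) :=
      fun m h => (sat'_reach h).trans histar1.1
    exact ⟨l0 ++ q.tail, hw2, fun w hw => main_lemma hchain HAu HB' _ hw2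
      ⟨p.get istar, List.mem_of_mem_getLast? hw2.2.2, List.get_mem ..⟩ w hw⟩
  · obtain ⟨q1, hq1⟩ := reach_toWalk (histar1.1.trans hsc.1)
    obtain ⟨l1, hw1, _⟩ := hj1
    have hw3 : DiWalk G (p.get istar) v (q1 ++ l1.tail) := dw_append hq1 hw1
    have HA' : ∀ m : Fin p.length, Sat' G p (p.get istar) (p.get m) →
        Relation.ReflTransGen G (p.get i) (p.get m) :=
      fun m h => histar1.2.trans (sat'_reach h)
    exact ⟨q1 ++ l1.tail, hw3, fun w hw => main_lemma hchain HA' HBv _ hw3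
      ⟨p.get istar, List.mem_of_mem_head? hw3.2.1, List.get_mem ..⟩ w hw⟩
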